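/- Let {P_t}_{t∈T} be a Markov semigroup on a Polish space (X, ρ) (T = ℕ₊, or T = [0,∞) with s ↦ P_s(x,A) Borel measurable for every x ∈ X and Borel set A) which is Feller and eventually continuous at every point of X. Let f : X → ℝ be bounded Lipschitz, let D be a countable dense subset of X, and let s_n ∈ T with s_n → ∞ be such that lim_{n→∞} Q_{s_n} f(x) exists for every x ∈ D, where Q_t f(x) = ∫_X f dQ_t(x,·). Then Q_{s_n} f converges pointwise on all of X, and the limit function g(x) = lim_{n→∞} Q_{s_n} f(x) is bounded and continuous on X. -/

import Mathlib

open MeasureTheory Filter Topology Metric ENNReal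
open scoped Classical

noncomputable section

variable {X : Type*}

/-- A bounded Lipschitz real-valued function. -/
def BddLip [PseudoMetricSpace X] (f : X → ℝ) : Prop :=
  (∃ K, LipschitzWith K f) ∧ ∃ C, ∀ x, |f x| ≤ C

/-- The topological support of a Borel measure:
`{x : μ(B(x,ε)) > 0 for every ε > 0}`. -/
def msupp [PseudoMetricSpace X] [MeasurableSpace X] (μ : Measure X) : Set X :=
  {x | ∀ ε > 0, 0 < μ (Metric.ball x ε)}

/-! ### Discrete time `T = ℕ₊` -/

/-- Action of a transition kernel family on bounded Borel functions:
`P_n f (x) = ∫ f(y) P_n(x,dy)`. -/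
def PfN [MeasurableSpace X] (P : ℕ → X → Measure X) (n : ℕ) (f : X → ℝ) (x : X) : ℝ :=
  ∫ y, f y ∂ P n x

/-- A Markov semigroup indexed by `T = ℕ₊ = {1,2,...}`. -/
def IsMarkovSemigroupN [MeasurableSpace X] (P : ℕ → X → Measure X) : Prop :=
  (∀ n x, 1 ≤ n → IsProbabilityMeasure (P n x)) ∧
  (∀ (n : ℕ) (A : Set X), 1 ≤ n → MeasurableSet A → Measurable fun x => P n x A) ∧
  ∀ (m n : ℕ) (x : X) (A : Set X), 1 ≤ m → 1 ≤ n → MeasurableSet A →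
    P (m + n) x A = ∫⁻ y, P n y A ∂ P m x

/-- The Feller property: each `P_n` maps bounded continuous functions to
bounded continuous functions. -/
def FellerN [MeasurableSpace X] [PseudoMetricSpace X] (P : ℕ → X → Measure X) : Prop :=
  ∀ n, 1 ≤ n → ∀ f : X → ℝ, Continuous f → (∃ C, ∀ x, |f x| ≤ C) →
    Continuous (fun x => PfN P n f x) ∧ ∃ C, ∀ x, |PfN P n f x| ≤ C

/-- The e-property at a point `z`. -/
def EPropN [MeasurableSpace X] [PseudoMetricSpace X] (P : ℕ → X → Measure X) (z : X) : Prop :=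
  ∀ f : X → ℝ, BddLip f → ∀ ε > 0, ∃ δ > 0, ∀ x, dist x z < δ → ∀ n, 1 ≤ n →
    |PfN P n f x - PfN P n f z| < ε

/-- The eventual e-property at a point `z`. -/
def EventualEPropN [MeasurableSpace X] [PseudoMetricSpace X] (P : ℕ → X → Measure X)
    (z : X) : Prop :=
  ∀ f : X → ℝ, BddLip f → ∀ ε > 0, ∃ δ > 0, ∃ n₀ : ℕ, 1 ≤ n₀ ∧
    ∀ x, dist x z < δ → ∀ n, n₀ ≤ n → |PfN P n f x - PfN P n f z| < ε

/-- Eventual continuity (asymptotic equicontinuity) at a point `z`. -/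
def EvContN [MeasurableSpace X] [PseudoMetricSpace X] (P : ℕ → X → Measure X) (z : X) : Prop :=
  ∀ f : X → ℝ, BddLip f → ∀ ε > 0, ∃ δ > 0, ∀ x, dist x z < δ →
    Filter.limsup (fun n => |PfN P n f x - PfN P n f z|) Filter.atTop ≤ ε

/-- Invariance of a measure: `P_n μ = μ` for all `n ∈ ℕ₊`. -/
def InvariantN [MeasurableSpace X] (P : ℕ → X → Measure X) (μ : Measure X) : Prop :=
  ∀ n, 1 ≤ n → μ.bind (P n) = μ

/-- `μ` is an ergodic invariant measure: it is invariant and every Borel set `A`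
with `P_n 1_A = 1_A` μ-a.e. for all `n` has `μ(A) ∈ {0,1}`. -/
def ErgodicMeasN [MeasurableSpace X] (P : ℕ → X → Measure X) (μ : Measure X) : Prop :=
  InvariantN P μ ∧
  ∀ A : Set X, MeasurableSet A →
    (∀ n, 1 ≤ n → ∀ᵐ x ∂μ, P n x A = A.indicator (fun _ => (1 : ℝ≥0∞)) x) →
    μ A = 0 ∨ μ A = 1

/-- Cesàro averages acting on functions: `Q_n f(x) = (1/n) ∑_{k=1}^n P_k f(x)`. -/
def QfN [MeasurableSpace X] (P : ℕ → X → Measure X) (n : ℕ) (f : X → ℝ) (x : X) : ℝ :=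
  (1 / (n : ℝ)) * ∑ k ∈ Finset.Icc 1 n, PfN P k f x

/-- Cesàro averages on sets: `Q_n(x,A) = (1/n) ∑_{k=1}^n P_k(x,A)`. -/
def QsetN [MeasurableSpace X] (P : ℕ → X → Measure X) (n : ℕ) (x : X) (A : Set X) : ℝ≥0∞ :=
  (n : ℝ≥0∞)⁻¹ * ∑ k ∈ Finset.Icc 1 n, P k x A

/-- Asymptotic stability with unique invariant measure `μs`. -/
def AsympStableN [MeasurableSpace X] [PseudoMetricSpace X] (P : ℕ → X → Measure X)
    (μs : Measure X) : Prop :=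
  IsProbabilityMeasure μs ∧ InvariantN P μs ∧
  (∀ ν : Measure X, IsProbabilityMeasure ν → InvariantN P ν → ν = μs) ∧
  ∀ ν : Measure X, IsProbabilityMeasure ν → ∀ f : X → ℝ, Continuous f →
    (∃ C, ∀ x, |f x| ≤ C) →
    Tendsto (fun n => ∫ y, f y ∂ (ν.bind (P n))) atTop (𝓝 (∫ y, f y ∂ μs))

/-! ### Continuous time `T = [0,∞)` -/

/-- Action on bounded Borel functions, continuous time. -/
def PfR [MeasurableSpace X] (P : ℝ → X → Measure X) (t : ℝ) (f : X → ℝ) (x : X) : ℝ :=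
  ∫ y, f y ∂ P t x

/-- A Markov semigroup indexed by `T = [0,∞)`, with `P_0(x,·) = δ_x`. -/
def IsMarkovSemigroupR [MeasurableSpace X] (P : ℝ → X → Measure X) : Prop :=
  (∀ t x, 0 ≤ t → IsProbabilityMeasure (P t x)) ∧
  (∀ (t : ℝ) (A : Set X), 0 ≤ t → MeasurableSet A → Measurable fun x => P t x A) ∧
  (∀ x, P 0 x = Measure.dirac x) ∧
  ∀ (s t : ℝ) (x : X) (A : Set X), 0 ≤ s → 0 ≤ t → MeasurableSet A →
    P (s + t) x A = ∫⁻ y, P t y A ∂ P s x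

/-- Joint time-measurability: `s ↦ P_s(x,A)` is Borel measurable. -/
def TimeMeasR [MeasurableSpace X] (P : ℝ → X → Measure X) : Prop :=
  ∀ (x : X) (A : Set X), MeasurableSet A → Measurable fun s : ℝ => P s x A

/-- The Feller property, continuous time. -/
def FellerR [MeasurableSpace X] [PseudoMetricSpace X] (P : ℝ → X → Measure X) : Prop :=
  ∀ t : ℝ, 0 ≤ t → ∀ f : X → ℝ, Continuous f → (∃ C, ∀ x, |f x| ≤ C) →
    Continuous (fun x => PfR P t f x) ∧ ∃ C, ∀ x, |PfR P t f x| ≤ C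

/-- Strong continuity on `C_b(X)`: `sup_x |P_t f(x) - f(x)| → 0` as `t ↓ 0`. -/
def StrongContR [MeasurableSpace X] [PseudoMetricSpace X] (P : ℝ → X → Measure X) : Prop :=
  ∀ f : X → ℝ, Continuous f → (∃ C, ∀ x, |f x| ≤ C) →
    ∀ ε > 0, ∃ η > 0, ∀ t : ℝ, 0 < t → t < η → ∀ x, |PfR P t f x - f x| < ε

/-- The e-property at a point `z`, continuous time. -/
def EPropR [MeasurableSpace X] [PseudoMetricSpace X] (P : ℝ → X → Measure X) (z : X) : Prop :=
  ∀ f : X → ℝ, BddLip f → ∀ ε > 0, ∃ δ > 0, ∀ x, dist x z < δ → ∀ t : ℝ, 0 ≤ t →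
    |PfR P t f x - PfR P t f z| < ε

/-- The eventual e-property at a point `z`, continuous time. -/
def EventualEPropR [MeasurableSpace X] [PseudoMetricSpace X] (P : ℝ → X → Measure X)
    (z : X) : Prop :=
  ∀ f : X → ℝ, BddLip f → ∀ ε > 0, ∃ δ > 0, ∃ t₀ : ℝ, 0 ≤ t₀ ∧
    ∀ x, dist x z < δ → ∀ t : ℝ, t₀ ≤ t → |PfR P t f x - PfR P t f z| < ε

/-- Eventual continuity at `z`, continuous time. -/
def EvContR [MeasurableSpace X] [PseudoMetricSpace X] (P : ℝ → X → Measure X) (z : X) : Prop :=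
  ∀ f : X → ℝ, BddLip f → ∀ ε > 0, ∃ δ > 0, ∀ x, dist x z < δ →
    Filter.limsup (fun t : ℝ => |PfR P t f x - PfR P t f z|) Filter.atTop ≤ ε

/-- Invariance, continuous time. -/
def InvariantR [MeasurableSpace X] (P : ℝ → X → Measure X) (μ : Measure X) : Prop :=
  ∀ t : ℝ, 0 ≤ t → μ.bind (P t) = μ

/-- Ergodic invariant measure, continuous time. -/
def ErgodicMeasR [MeasurableSpace X] (P : ℝ → X → Measure X) (μ : Measure X) : Prop :=
  InvariantR P μ ∧
  ∀ A : Set X, MeasurableSet A →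
    (∀ t : ℝ, 0 ≤ t → ∀ᵐ x ∂μ, P t x A = A.indicator (fun _ => (1 : ℝ≥0∞)) x) →
    μ A = 0 ∨ μ A = 1

/-- Cesàro averages acting on functions: `Q_t f(x) = (1/t) ∫_0^t P_s f(x) ds`. -/
def QfR [MeasurableSpace X] (P : ℝ → X → Measure X) (t : ℝ) (f : X → ℝ) (x : X) : ℝ :=
  (1 / t) * ∫ s in Set.Ioc (0 : ℝ) t, PfR P s f x

/-- Cesàro averages on sets: `Q_t(x,A) = (1/t) ∫_0^t P_s(x,A) ds`. -/
def QsetR [MeasurableSpace X] (P : ℝ → X → Measure X) (t : ℝ) (x : X) (A : Set X) : ℝ≥0∞ :=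
  ENNReal.ofReal (1 / t) * ∫⁻ s in Set.Ioc (0 : ℝ) t, P s x A

/-- Asymptotic stability, continuous time. -/
def AsympStableR [MeasurableSpace X] [PseudoMetricSpace X] (P : ℝ → X → Measure X)
    (μs : Measure X) : Prop :=
  IsProbabilityMeasure μs ∧ InvariantR P μs ∧
  (∀ ν : Measure X, IsProbabilityMeasure ν → InvariantR P ν → ν = μs) ∧
  ∀ ν : Measure X, IsProbabilityMeasure ν → ∀ f : X → ℝ, Continuous f →
    (∃ C, ∀ x, |f x| ≤ C) →
    Tendsto (fun t : ℝ => ∫ y, f y ∂ (ν.bind (P t))) atTop (𝓝 (∫ y, f y ∂ μs))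

end
universe u

section auxlemmas

open MeasureTheory Filter Topology Metric ENNReal

lemma key_limit {X : Type*} [MetricSpace X] (u : ℕ → X → ℝ) (C : ℝ)
    (hb : ∀ n x, |u n x| ≤ C)
    (D : Set X) (hD : Dense D)
    (heq : ∀ z : X, ∀ ε : ℝ, 0 < ε → ∃ δ > 0, ∀ x, dist x z < δ →
      ∀ᶠ n in atTop, |u n x - u n z| ≤ ε)
    (hconv : ∀ x ∈ D, ∃ L, Tendsto (fun n => u n x) atTop (𝓝 L)) :
    ∃ g : X → ℝ, Continuous g ∧ (∃ C', ∀ x, |g x| ≤ C') ∧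
      ∀ x, Tendsto (fun n => u n x) atTop (𝓝 (g x)) := by
  have hcau : ∀ x : X, ∃ L, Tendsto (fun n => u n x) atTop (𝓝 L) := by
    intro x
    have hc : CauchySeq fun n => u n x := by
      rw [Metric.cauchySeq_iff]
      intro ε hε
      obtain ⟨δ, hδ, hδ'⟩ := heq x (ε/4) (by linarith)
      obtain ⟨d, hdD, hdist⟩ := hD.exists_dist_lt x hδ
      obtain ⟨Ld, hLd⟩ := hconv d hdD
      obtain ⟨N1, hN1⟩ := Metric.cauchySeq_iff.mp hLd.cauchySeq (ε/4) (by linarith)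
      obtain ⟨N2, hN2⟩ := eventually_atTop.mp (hδ' d (by rwa [dist_comm]))
      refine ⟨max N1 N2, fun m hm n hn => ?_⟩
      have h1 := hN2 m (le_trans (le_max_right _ _) hm)
      have h2 := hN2 n (le_trans (le_max_right _ _) hn)
      have h3 := hN1 m (le_trans (le_max_left _ _) hm) n (le_trans (le_max_left _ _) hn)
      rw [Real.dist_eq] at h3 ⊢
      have t1 : |u m x - u n x| ≤ |u m x - u m d| + |u m d - u n d| + |u n d - u n x| := by
        have := abs_sub_le (u m x) (u m d) (u n x)
        have := abs_sub_le (u m d) (u n d) (u n x)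
        linarith
      have e1 : |u m x - u m d| = |u m d - u m x| := abs_sub_comm _ _
      linarith [h1, h2, h3, t1, e1.le, e1.ge]
    exact cauchySeq_tendsto_of_complete hc
  choose g hg using hcau
  refine ⟨g, ?_, ⟨C, fun x => ?_⟩, hg⟩
  · rw [Metric.continuous_iff]
    intro z ε hε
    obtain ⟨δ, hδ, hδ'⟩ := heq z (ε/2) (by linarith)
    refine ⟨δ, hδ, fun x hx => ?_⟩
    have h1 : Tendsto (fun n => |u n x - u n z|) atTop (𝓝 |g x - g z|) :=
      ((hg x).sub (hg z)).abs
    have h2 := le_of_tendsto h1 (hδ' x hx)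
    rw [Real.dist_eq]; linarith
  · exact le_of_tendsto (hg x).abs (Eventually.of_forall fun n => hb n x)

lemma heqN_lemma {X : Type*} [MetricSpace X] [MeasurableSpace X]
    (P : ℕ → X → MeasureTheory.Measure X) (f : X → ℝ) (C : ℝ)
    (hPb : ∀ k, 1 ≤ k → ∀ y : X, |PfN P k f y| ≤ C)
    (z : X)
    (hecz : ∀ ε > 0, ∃ δ > 0, ∀ x, dist x z < δ →
      Filter.limsup (fun n => |PfN P n f x - PfN P n f z|) atTop ≤ ε)
    (ε : ℝ) (hε : 0 < ε) :
    ∃ δ > 0, ∀ x, dist x z < δ → ∃ m₀ : ℕ,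
      ∀ m, m₀ ≤ m → |QfN P m f x - QfN P m f z| ≤ ε := by
  obtain ⟨δ, hδ, hδ'⟩ := hecz (ε/4) (by linarith)
  refine ⟨δ, hδ, fun x hx => ?_⟩
  have hbdd : IsBoundedUnder (· ≤ ·) atTop (fun n => |PfN P n f x - PfN P n f z|) := by
    apply isBoundedUnder_of_eventually_le (a := 2*C)
    filter_upwards [eventually_ge_atTop 1] with k hk
    have h1 := hPb k hk x
    have h2 := hPb k hk z
    calc |PfN P k f x - PfN P k f z| ≤ |PfN P k f x| + |PfN P k f z| := abs_sub _ _
    _ ≤ 2*C := by linarith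
  have hev : ∀ᶠ k in atTop, |PfN P k f x - PfN P k f z| < ε/3 :=
    eventually_lt_of_limsup_lt (lt_of_le_of_lt (hδ' x hx) (by linarith)) hbdd
  obtain ⟨k₀', hk₀'⟩ := eventually_atTop.mp hev
  set k₁ := max k₀' 1 with hk₁def
  have hk₁1 : 1 ≤ k₁ := le_max_right _ _
  have hkbig : ∀ k, k₁ ≤ k → |PfN P k f x - PfN P k f z| < ε/3 :=
    fun k h => hk₀' k (le_trans (le_max_left _ _) h)
  refine ⟨max k₁ ⌈6*C*(k₁:ℝ)/ε⌉₊, fun m hm => ?_⟩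
  have hm1 : 1 ≤ m := le_trans hk₁1 (le_trans (le_max_left _ _) hm)
  have hmR : (1:ℝ) ≤ (m:ℝ) := by exact_mod_cast hm1
  have hmpos : (0:ℝ) < (m:ℝ) := by linarith
  have hceilm : (⌈6*C*(k₁:ℝ)/ε⌉₊ : ℝ) ≤ (m:ℝ) := by
    exact_mod_cast le_trans (le_max_right _ _) hm
  have hceil : 6*C*(k₁:ℝ)/ε ≤ (m:ℝ) := le_trans (Nat.le_ceil _) hceilm
  have h6 : 6*C*(k₁:ℝ) ≤ ε*(m:ℝ) := by
    rw [div_le_iff₀ hε] at hceil; linarith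
  have hC0 : 0 ≤ C := le_trans (abs_nonneg _) (hPb 1 le_rfl z)
  have hsum : |∑ k ∈ Finset.Icc 1 m, (PfN P k f x - PfN P k f z)|
      ≤ (m:ℝ)*(ε/3) + 2*C*(k₁:ℝ) := by
    calc |∑ k ∈ Finset.Icc 1 m, (PfN P k f x - PfN P k f z)|
        ≤ ∑ k ∈ Finset.Icc 1 m, |PfN P k f x - PfN P k f z| :=
          Finset.abs_sum_le_sum_abs _ _
      _ ≤ ∑ k ∈ Finset.Icc 1 m, (ε/3 + if k < k₁ then 2*C else 0) := by
          refine Finset.sum_le_sum fun k hkmem => ?_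
          rw [Finset.mem_Icc] at hkmem
          by_cases hlt : k < k₁
          · rw [if_pos hlt]
            have h1 := hPb k hkmem.1 x
            have h2 := hPb k hkmem.1 z
            have := abs_sub (PfN P k f x) (PfN P k f z)
            linarith
          · rw [if_neg hlt]
            have := hkbig k (not_lt.mp hlt)
            linarith
      _ = (m:ℝ)*(ε/3) + ∑ k ∈ Finset.Icc 1 m, (if k < k₁ then 2*C else 0) := by
          rw [Finset.sum_add_distrib, Finset.sum_const, Nat.card_Icc, nsmul_eq_mul]
          norm_num
      _ ≤ (m:ℝ)*(ε/3) + 2*C*(k₁:ℝ) := by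
          have heqf : ∑ k ∈ Finset.Icc 1 m, (if k < k₁ then 2*C else 0)
              = (((Finset.Icc 1 m).filter (· < k₁)).card : ℝ) * (2*C) := by
            rw [← Finset.sum_filter, Finset.sum_const, nsmul_eq_mul]
          rw [heqf]
          have hcard : ((Finset.Icc 1 m).filter (· < k₁)).card ≤ k₁ := by
            refine le_trans (Finset.card_le_card (fun k hkm => ?_))
              (le_of_eq (Finset.card_range k₁))
            rw [Finset.mem_filter] at hkm
            exact Finset.mem_range.mpr hkm.2
          have hcardR : (((Finset.Icc 1 m).filter (· < k₁)).card : ℝ) ≤ (k₁:ℝ) := by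
            exact_mod_cast hcard
          nlinarith
  have hQ : QfN P m f x - QfN P m f z
      = (1/(m:ℝ)) * ∑ k ∈ Finset.Icc 1 m, (PfN P k f x - PfN P k f z) := by
    rw [QfN, QfN, ← mul_sub, ← Finset.sum_sub_distrib]
  rw [hQ, abs_mul, abs_of_nonneg (by positivity : (0:ℝ) ≤ 1/(m:ℝ)), one_div,
    inv_mul_le_iff₀ hmpos]
  have hεm : 0 ≤ ε*(m:ℝ) := by positivity
  calc |∑ k ∈ Finset.Icc 1 m, (PfN P k f x - PfN P k f z)|
      ≤ (m:ℝ)*(ε/3) + 2*C*(k₁:ℝ) := hsum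
    _ ≤ (m:ℝ)*ε := by linarith

lemma smPfR {X : Type*} [MeasurableSpace X]
    (P : ℝ → X → MeasureTheory.Measure X) {f : X → ℝ}
    (hf : MeasureTheory.StronglyMeasurable f)
    (hprob : ∀ t x, 0 ≤ t → MeasureTheory.IsProbabilityMeasure (P t x))
    (hTM : ∀ (x : X) (A : Set X), MeasurableSet A → Measurable fun s : ℝ => P s x A)
    (y : X) : MeasureTheory.StronglyMeasurable (fun r : ℝ => PfR P (max r 0) f y) := by
  set κ : ProbabilityTheory.Kernel ℝ X :=
    ⟨fun r => P (max r 0) y, by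
      refine MeasureTheory.Measure.measurable_of_measurable_coe _ fun A hA => ?_
      exact (hTM y A hA).comp (measurable_id.max measurable_const)⟩ with hκ
  haveI : ProbabilityTheory.IsMarkovKernel κ := ⟨fun r => hprob _ y (le_max_right _ _)⟩
  have h : MeasureTheory.StronglyMeasurable fun r => ∫ y', f y' ∂ κ r := by
    refine MeasureTheory.StronglyMeasurable.integral_kernel_prod_right
      (κ := κ) (f := fun (_ : ℝ) (y' : X) => f y') ?_
    exact hf.comp_measurable measurable_snd
  simpa [κ, PfR] using h

lemma intOnPfR {X : Type*} [MeasurableSpace X]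
    (P : ℝ → X → MeasureTheory.Measure X) {f : X → ℝ} {C : ℝ} (y : X)
    (hsm : MeasureTheory.StronglyMeasurable (fun r : ℝ => PfR P (max r 0) f y))
    (hPb : ∀ t : ℝ, 0 ≤ t → ∀ w : X, |PfR P t f w| ≤ C)
    {b c : ℝ} (hb : 0 ≤ b) :
    MeasureTheory.IntegrableOn (fun r => PfR P r f y) (Set.Ioc b c) ∧
      MeasureTheory.AEStronglyMeasurable (fun r => PfR P r f y)
        (MeasureTheory.volume.restrict (Set.Ioc b c)) := by
  haveI : MeasureTheory.IsFiniteMeasure (MeasureTheory.volume.restrict (Set.Ioc b c)) := by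
    constructor
    rw [MeasureTheory.Measure.restrict_apply_univ, Real.volume_Ioc]
    exact ENNReal.ofReal_lt_top
  have haesm : MeasureTheory.AEStronglyMeasurable (fun r => PfR P r f y)
      (MeasureTheory.volume.restrict (Set.Ioc b c)) := by
    refine (hsm.aestronglyMeasurable.restrict).congr ?_
    filter_upwards [MeasureTheory.ae_restrict_mem measurableSet_Ioc] with r hr
    rw [max_eq_left (le_trans hb hr.1.le)]
  refine ⟨MeasureTheory.Integrable.mono' (MeasureTheory.integrable_const C) haesm ?_, haesm⟩
  filter_upwards [MeasureTheory.ae_restrict_mem measurableSet_Ioc] with r hr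
  rw [Real.norm_eq_abs]
  exact hPb r (le_trans hb hr.1.le) y

lemma heqR_lemma {X : Type*} [MetricSpace X] [MeasurableSpace X]
    (P : ℝ → X → MeasureTheory.Measure X) (f : X → ℝ) (C : ℝ)
    (hPb : ∀ t : ℝ, 0 ≤ t → ∀ y : X, |PfR P t f y| ≤ C)
    (hsm : ∀ y : X, MeasureTheory.StronglyMeasurable (fun r : ℝ => PfR P (max r 0) f y))
    (z : X)
    (hecz : ∀ ε > 0, ∃ δ > 0, ∀ x, dist x z < δ →
      Filter.limsup (fun t : ℝ => |PfR P t f x - PfR P t f z|) atTop ≤ ε)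
    (ε : ℝ) (hε : 0 < ε) :
    ∃ δ > 0, ∀ x, dist x z < δ → ∃ T₀ : ℝ,
      ∀ t : ℝ, T₀ ≤ t → |QfR P t f x - QfR P t f z| ≤ ε := by
  obtain ⟨δ, hδ, hδ'⟩ := hecz (ε/6) (by linarith)
  refine ⟨δ, hδ, fun x hx => ?_⟩
  have hC0 : 0 ≤ C := le_trans (abs_nonneg _) (hPb 0 le_rfl z)
  have hbdd : IsBoundedUnder (· ≤ ·) atTop (fun t : ℝ => |PfR P t f x - PfR P t f z|) := by
    apply isBoundedUnder_of_eventually_le (a := 2*C)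
    filter_upwards [eventually_ge_atTop (0:ℝ)] with t ht
    have h1 := hPb t ht x
    have h2 := hPb t ht z
    calc |PfR P t f x - PfR P t f z| ≤ |PfR P t f x| + |PfR P t f z| := abs_sub _ _
    _ ≤ 2*C := by linarith
  have hev : ∀ᶠ t : ℝ in atTop, |PfR P t f x - PfR P t f z| < ε/3 :=
    eventually_lt_of_limsup_lt (lt_of_le_of_lt (hδ' x hx) (by linarith)) hbdd
  obtain ⟨a, ha⟩ := eventually_atTop.mp hev
  set t₀ := max a 0 with ht₀def
  have ht₀0 : 0 ≤ t₀ := le_max_right _ _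
  have hbig : ∀ r : ℝ, t₀ ≤ r → |PfR P r f x - PfR P r f z| < ε/3 :=
    fun r h => ha r (le_trans (le_max_left _ _) h)
  refine ⟨max t₀ (6*C*t₀/ε) + 1, fun t ht => ?_⟩
  have hd1 : 0 ≤ 6*C*t₀/ε := by positivity
  have ht₀t : t₀ ≤ t := by
    have := le_max_left t₀ (6*C*t₀/ε); linarith
  have htpos : 0 < t := by
    have := le_max_right t₀ (6*C*t₀/ε); linarith
  have h6 : 6*C*t₀ ≤ ε*t := by
    have h1 : 6*C*t₀/ε ≤ t := by have := le_max_right t₀ (6*C*t₀/ε); linarith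
    rw [div_le_iff₀ hε] at h1; linarith
  obtain ⟨hintx, haesx⟩ := intOnPfR P x (hsm x) hPb (le_refl (0:ℝ)) (c := t)
  obtain ⟨hintz, haesz⟩ := intOnPfR P z (hsm z) hPb (le_refl (0:ℝ)) (c := t)
  have hQdiff : QfR P t f x - QfR P t f z
      = (1/t) * ∫ r in Set.Ioc (0:ℝ) t, (PfR P r f x - PfR P r f z) := by
    rw [QfR, QfR, ← mul_sub, ← MeasureTheory.integral_sub hintx hintz]
  obtain ⟨hintx1, haesx1⟩ := intOnPfR P x (hsm x) hPb (le_refl (0:ℝ)) (c := t₀)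
  obtain ⟨hintz1, haesz1⟩ := intOnPfR P z (hsm z) hPb (le_refl (0:ℝ)) (c := t₀)
  obtain ⟨hintx2, haesx2⟩ := intOnPfR P x (hsm x) hPb ht₀0 (c := t)
  obtain ⟨hintz2, haesz2⟩ := intOnPfR P z (hsm z) hPb ht₀0 (c := t)
  have hsplit : (∫ r in Set.Ioc (0:ℝ) t, (PfR P r f x - PfR P r f z))
      = (∫ r in Set.Ioc (0:ℝ) t₀, (PfR P r f x - PfR P r f z))
        + ∫ r in Set.Ioc t₀ t, (PfR P r f x - PfR P r f z) := by
    rw [← Set.Ioc_union_Ioc_eq_Ioc ht₀0 ht₀t]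
    exact MeasureTheory.setIntegral_union (Set.Ioc_disjoint_Ioc_of_le le_rfl) measurableSet_Ioc
      (hintx1.sub hintz1) (hintx2.sub hintz2)
  have hvol1 : (MeasureTheory.volume (Set.Ioc (0:ℝ) t₀)).toReal = t₀ := by
    rw [Real.volume_Ioc, ENNReal.toReal_ofReal (by linarith)]; ring
  have hvol2 : (MeasureTheory.volume (Set.Ioc t₀ t)).toReal = t - t₀ := by
    rw [Real.volume_Ioc, ENNReal.toReal_ofReal (by linarith)]
  have hb1 : |∫ r in Set.Ioc (0:ℝ) t₀, (PfR P r f x - PfR P r f z)| ≤ 2*C*t₀ := by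
    rw [← Real.norm_eq_abs]
    calc ‖∫ r in Set.Ioc (0:ℝ) t₀, (PfR P r f x - PfR P r f z)‖
        ≤ (2*C) * (MeasureTheory.volume (Set.Ioc (0:ℝ) t₀)).toReal := by
          refine MeasureTheory.norm_setIntegral_le_of_norm_le_const ?_ (fun r hr => ?_)
          · rw [Real.volume_Ioc]; exact ENNReal.ofReal_lt_top
          · rw [Real.norm_eq_abs]
            have h1 := hPb r hr.1.le x
            have h2 := hPb r hr.1.le z
            calc |PfR P r f x - PfR P r f z| ≤ |PfR P r f x| + |PfR P r f z| := abs_sub _ _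
            _ ≤ 2*C := by linarith
      _ = 2*C*t₀ := by rw [hvol1]
  have hb2 : |∫ r in Set.Ioc t₀ t, (PfR P r f x - PfR P r f z)| ≤ (ε/3)*(t - t₀) := by
    rw [← Real.norm_eq_abs]
    calc ‖∫ r in Set.Ioc t₀ t, (PfR P r f x - PfR P r f z)‖
        ≤ (ε/3) * (MeasureTheory.volume (Set.Ioc t₀ t)).toReal := by
          refine MeasureTheory.norm_setIntegral_le_of_norm_le_const ?_ (fun r hr => ?_)
          · rw [Real.volume_Ioc]; exact ENNReal.ofReal_lt_top
          · rw [Real.norm_eq_abs]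
            exact (hbig r hr.1.le).le
      _ = (ε/3)*(t - t₀) := by rw [hvol2]
  rw [hQdiff, abs_mul, abs_of_nonneg (by positivity : (0:ℝ) ≤ 1/t), one_div,
    inv_mul_le_iff₀ htpos]
  have htri := abs_add_le (∫ r in Set.Ioc (0:ℝ) t₀, (PfR P r f x - PfR P r f z))
    (∫ r in Set.Ioc t₀ t, (PfR P r f x - PfR P r f z))
  rw [hsplit]
  nlinarith [mul_nonneg hε.le ht₀0]

end auxlemmas


/-- for a Feller, everywhere eventually continuous Markov semigroup, if
`f` is bounded Lipschitz, `D` is countable and dense, `s_n → ∞` in `T`, and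
`Q_{s_n} f(x)` converges for every `x ∈ D`, then `Q_{s_n} f` converges pointwise on all
of `X` and the limit function is bounded and continuous; stated for both `T = ℕ₊` and
`T = [0,∞)`. -/
theorem stmt14 :
    (∀ (X : Type u) [MetricSpace X] [CompleteSpace X] [TopologicalSpace.SeparableSpace X]
        [MeasurableSpace X] [BorelSpace X]
        (P : ℕ → X → Measure X) (f : X → ℝ) (D : Set X) (s : ℕ → ℕ),
      IsMarkovSemigroupN P → FellerN P → (∀ z : X, EvContN P z) →
      BddLip f → D.Countable → Dense D →
      (∀ n, 1 ≤ s n) → Tendsto s atTop atTop →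
      (∀ x ∈ D, ∃ L : ℝ, Tendsto (fun n : ℕ => QfN P (s n) f x) atTop (𝓝 L)) →
      ∃ g : X → ℝ, Continuous g ∧ (∃ C, ∀ x, |g x| ≤ C) ∧
        ∀ x : X, Tendsto (fun n : ℕ => QfN P (s n) f x) atTop (𝓝 (g x))) ∧
    (∀ (X : Type u) [MetricSpace X] [CompleteSpace X] [TopologicalSpace.SeparableSpace X]
        [MeasurableSpace X] [BorelSpace X]
        (P : ℝ → X → Measure X) (f : X → ℝ) (D : Set X) (s : ℕ → ℝ),
      IsMarkovSemigroupR P → FellerR P → TimeMeasR P → (∀ z : X, EvContR P z) →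
      BddLip f → D.Countable → Dense D →
      (∀ n, 0 ≤ s n) → Tendsto s atTop atTop →
      (∀ x ∈ D, ∃ L : ℝ, Tendsto (fun n : ℕ => QfR P (s n) f x) atTop (𝓝 L)) →
      ∃ g : X → ℝ, Continuous g ∧ (∃ C, ∀ x, |g x| ≤ C) ∧
        ∀ x : X, Tendsto (fun n : ℕ => QfR P (s n) f x) atTop (𝓝 (g x))) := by
  constructor
  · intro X _ _ _ _ _ P f D s hMS hFel hEC hBL hDc hD hs1 hsT hLim
    obtain ⟨⟨K, hK⟩, C, hC⟩ := id hBL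
    have hPb : ∀ k, 1 ≤ k → ∀ y : X, |PfN P k f y| ≤ C := by
      intro k hk y
      haveI := hMS.1 k y hk
      rw [PfN, ← Real.norm_eq_abs]
      calc ‖∫ y', f y' ∂ P k y‖ ≤ C * ((P k y) Set.univ).toReal :=
            norm_integral_le_of_norm_le_const (Filter.Eventually.of_forall fun w => by
              rw [Real.norm_eq_abs]; exact hC w)
        _ = C := by simp
    have hQb : ∀ m, 1 ≤ m → ∀ y : X, |QfN P m f y| ≤ C := by
      intro m hm y
      have hmpos : (0:ℝ) < (m:ℝ) := by exact_mod_cast hm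
      rw [QfN, abs_mul, abs_of_nonneg (by positivity : (0:ℝ) ≤ 1/(m:ℝ)), one_div,
        inv_mul_le_iff₀ hmpos]
      calc |∑ k ∈ Finset.Icc 1 m, PfN P k f y|
          ≤ ∑ k ∈ Finset.Icc 1 m, |PfN P k f y| := Finset.abs_sum_le_sum_abs _ _
        _ ≤ ∑ _k ∈ Finset.Icc 1 m, C :=
            Finset.sum_le_sum fun k hk => hPb k (Finset.mem_Icc.mp hk).1 y
        _ = (m:ℝ) * C := by
            rw [Finset.sum_const, Nat.card_Icc, nsmul_eq_mul]; norm_num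
    refine key_limit (fun n x => QfN P (s n) f x) C
      (fun n x => hQb (s n) (hs1 n) x) D hD ?_ hLim
    intro z ε hε
    obtain ⟨δ, hδ, h⟩ := heqN_lemma P f C hPb z (hEC z f hBL) ε hε
    refine ⟨δ, hδ, fun x hx => ?_⟩
    obtain ⟨m₀, hm₀⟩ := h x hx
    filter_upwards [hsT.eventually_ge_atTop m₀] with n hn
    exact hm₀ (s n) hn
  · intro X _ _ _ _ _ P f D s hMS hFel hTM hEC hBL hDc hD hs0 hsT hLim
    obtain ⟨⟨K, hK⟩, C, hC⟩ := id hBL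
    have hprob := hMS.1
    have hPb : ∀ t : ℝ, 0 ≤ t → ∀ y : X, |PfR P t f y| ≤ C := by
      intro t ht y
      haveI := hprob t y ht
      rw [PfR, ← Real.norm_eq_abs]
      calc ‖∫ y', f y' ∂ P t y‖ ≤ C * ((P t y) Set.univ).toReal :=
            norm_integral_le_of_norm_le_const (Filter.Eventually.of_forall fun w => by
              rw [Real.norm_eq_abs]; exact hC w)
        _ = C := by simp
    have hsm : ∀ y : X, StronglyMeasurable (fun r : ℝ => PfR P (max r 0) f y) :=
      fun y => smPfR P hK.continuous.stronglyMeasurable hprob (fun x A hA => hTM x A hA) y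
    have hQb : ∀ t : ℝ, 0 ≤ t → ∀ y : X, |QfR P t f y| ≤ C := by
      intro t ht y
      have hC0 : 0 ≤ C := le_trans (abs_nonneg _) (hC y)
      rcases eq_or_lt_of_le ht with h|h
      · subst h; simpa [QfR] using hC0
      · obtain ⟨hint, haes⟩ := intOnPfR P y (hsm y) hPb (le_refl (0:ℝ)) (c := t)
        rw [QfR, abs_mul, abs_of_nonneg (by positivity : (0:ℝ) ≤ 1/t), one_div,
          inv_mul_le_iff₀ h, ← Real.norm_eq_abs]
        calc ‖∫ r in Set.Ioc (0:ℝ) t, PfR P r f y‖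
            ≤ C * (volume (Set.Ioc (0:ℝ) t)).toReal := by
              refine norm_setIntegral_le_of_norm_le_const ?_ (fun r hr => ?_)
              · rw [Real.volume_Ioc]; exact ENNReal.ofReal_lt_top
              · rw [Real.norm_eq_abs]; exact hPb r hr.1.le y
          _ = C * t := by
              rw [Real.volume_Ioc, ENNReal.toReal_ofReal (by linarith)]; ring
          _ = t * C := mul_comm _ _
    refine key_limit (fun n x => QfR P (s n) f x) C
      (fun n x => hQb (s n) (hs0 n) x) D hD ?_ hLim
    intro z ε hε
    obtain ⟨δ, hδ, h⟩ := heqR_lemma P f C hPb hsm z (hEC z f hBL) ε hε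
    refine ⟨δ, hδ, fun x hx => ?_⟩
    obtain ⟨T₀, hT₀⟩ := h x hx
    filter_upwards [hsT.eventually_ge_atTop T₀] with n hn
    exact hT₀ (s n) hn
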